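/- Let l1, l2, l3 be integers, each at least 2. Then the sum over all six permutations σ of {1,2,3} of the products ζ(l_{σ(1)}, l_{σ(2)})·ζ(l_{σ(3)}) satisfies Σ_{σ ∈ S3} ζ(l_{σ(1)}, l_{σ(2)})·ζ(l_{σ(3)}) = 3·ζ(l1)ζ(l2)ζ(l3) − [ζ(l1+l2)ζ(l3) + ζ(l1+l3)ζ(l2) + ζ(l2+l3)ζ(l1)]. (Equation (2) of the paper's depth-3 lemma in Section 4.2, restricted to convergent indices; there the sum is indexed by the set C3·S2, which equals S3.) -/

import Mathlib

open Classical in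
/-- The multiple zeta value `ζ(l 0, l 1, …, l (n-1)) =
∑_{m 0 > m 1 > ⋯ > m (n-1) ≥ 1} ∏ i, 1 / (m i) ^ (l i)`. -/
noncomputable def mzv {n : ℕ} (l : Fin n → ℕ) : ℝ :=
  ∑' m : Fin n → ℕ,
    if StrictAnti m ∧ ∀ i, 1 ≤ m i then ∏ i, (1 : ℝ) / (m i : ℝ) ^ (l i) else 0

open Classical in
lemma mzv_one (k : ℕ) (hk : 1 ≤ k) : mzv ![k] = ∑' m : ℕ, 1 / (m : ℝ) ^ k := by
  rw [mzv, ← (Equiv.funUnique (Fin 1) ℕ).symm.tsum_eq]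
  refine tsum_congr fun n => ?_
  have hsa : StrictAnti ((Equiv.funUnique (Fin 1) ℕ).symm n) := by
    intro i j hij
    exact absurd hij (by simp [Subsingleton.elim i j])
  rcases Nat.eq_zero_or_pos n with rfl | hn
  · simp [zero_pow (by omega : k ≠ 0)]
  · rw [if_pos ⟨hsa, fun i => hn⟩, Fin.prod_univ_one]
    simp

lemma strictAnti_fin_two {m : Fin 2 → ℕ} : StrictAnti m ↔ m 1 < m 0 := by
  constructor
  · exact fun h => h (by norm_num : (0 : Fin 2) < 1)
  · intro h i j hij
    fin_cases i <;> fin_cases j <;> first | exact h | exact absurd hij (by simp)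

open Classical in
lemma mzv_two (a b : ℕ) (hb : 1 ≤ b) :
    mzv ![a, b] = ∑' p : ℕ × ℕ,
      if p.2 < p.1 then (1 / (p.1 : ℝ) ^ a) * (1 / (p.2 : ℝ) ^ b) else 0 := by
  rw [mzv, ← (piFinTwoEquiv fun _ => ℕ).symm.tsum_eq]
  refine tsum_congr fun p => ?_
  have e0 : (piFinTwoEquiv fun _ => ℕ).symm p 0 = p.1 := rfl
  have e1 : (piFinTwoEquiv fun _ => ℕ).symm p 1 = p.2 := rfl
  by_cases hlt : p.2 < p.1
  · rcases Nat.eq_zero_or_pos p.2 with h2 | h2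
    · rw [if_neg, if_pos hlt]
      · rw [h2]
        simp [zero_pow (by omega : b ≠ 0)]
      · rintro ⟨-, hall⟩
        have := hall 1
        omega
    · rw [if_pos, if_pos hlt, Fin.prod_univ_two, e0, e1]
      · simp
      · refine ⟨strictAnti_fin_two.mpr (by rw [e0, e1]; exact hlt), fun i => ?_⟩
        fin_cases i
        · show 1 ≤ p.1; omega
        · show 1 ≤ p.2; omega
  · rw [if_neg, if_neg hlt]
    rintro ⟨hsa, -⟩
    exact hlt (by rw [← e0, ← e1]; exact strictAnti_fin_two.mp hsa)

lemma stuffle (a b : ℕ) (ha : 2 ≤ a) (hb : 2 ≤ b) :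
    mzv ![a, b] + mzv ![b, a] = mzv ![a] * mzv ![b] - mzv ![a + b] := by
  set f : ℕ → ℝ := fun m => 1 / (m : ℝ) ^ a with hf_def
  set g : ℕ → ℝ := fun m => 1 / (m : ℝ) ^ b with hg_def
  have hf : Summable f := Real.summable_one_div_nat_pow.mpr (by omega)
  have hg : Summable g := Real.summable_one_div_nat_pow.mpr (by omega)
  have hf0 : 0 ≤ f := fun m => by positivity
  have hg0 : 0 ≤ g := fun m => by positivity
  set F : ℕ × ℕ → ℝ := fun p => f p.1 * g p.2 with hF_def
  have hF : Summable F := hf.mul_of_nonneg hg hf0 hg0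
  have hF0 : ∀ p, 0 ≤ F p := fun p => mul_nonneg (hf0 p.1) (hg0 p.2)
  set F1 : ℕ × ℕ → ℝ := fun p => if p.2 < p.1 then F p else 0 with hF1_def
  set F2 : ℕ × ℕ → ℝ := fun p => if p.1 < p.2 then F p else 0 with hF2_def
  set F3 : ℕ × ℕ → ℝ := fun p => if p.1 = p.2 then F p else 0 with hF3_def
  have hsplit : ∀ p, F p = F1 p + F2 p + F3 p := by
    intro p
    rcases lt_trichotomy p.1 p.2 with h | h | h
    · simp [hF1_def, hF2_def, hF3_def, h, Nat.lt_asymm h, h.ne]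
    · simp [hF1_def, hF2_def, hF3_def, h]
    · simp [hF1_def, hF2_def, hF3_def, h, Nat.lt_asymm h, h.ne']
  have hle : ∀ (C : ℕ × ℕ → Prop) [DecidablePred C],
      Summable fun p => if C p then F p else 0 := by
    intro C _
    refine hF.of_nonneg_of_le (fun p => ?_) (fun p => ?_)
    · by_cases h : C p <;> simp [h, hF0 p]
    · by_cases h : C p <;> simp [h, hF0 p]
  have hS1 : Summable F1 := hle _
  have hS2 : Summable F2 := hle _
  have hS3 : Summable F3 := hle _
  have htot : (∑' p, F p) = (∑' p, F1 p) + (∑' p, F2 p) + (∑' p, F3 p) := by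
    rw [← Summable.tsum_add hS1 hS2, ← Summable.tsum_add (hS1.add hS2) hS3]
    exact tsum_congr hsplit
  have hmul : (∑' p, F p) = mzv ![a] * mzv ![b] := by
    rw [mzv_one a (by omega), mzv_one b (by omega)]
    exact (Summable.tsum_mul_tsum hf hg hF).symm
  have h1 : (∑' p, F1 p) = mzv ![a, b] := (mzv_two a b (by omega)).symm
  have h2 : (∑' p, F2 p) = mzv ![b, a] := by
    rw [mzv_two b a (by omega), ← (Equiv.prodComm ℕ ℕ).tsum_eq]
    refine tsum_congr fun p => ?_
    simp only [Equiv.prodComm_apply, Prod.snd_swap, Prod.fst_swap, hF2_def, hF_def,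
      hf_def, hg_def, one_div]
    by_cases h : p.1 < p.2 <;> simp [h, mul_comm]
  have h3 : (∑' p, F3 p) = mzv ![a + b] := by
    rw [mzv_one (a + b) (by omega)]
    have hinj : Function.Injective (fun m : ℕ => (m, m)) := fun x y h => (Prod.mk.injEq _ _ _ _ ▸ h).1
    rw [← hinj.tsum_eq]
    · refine tsum_congr fun m => ?_
      simp only [hF3_def, hF_def, if_pos rfl, hf_def, hg_def]
      rw [div_mul_div_comm, one_mul, ← pow_add]
    · intro p hp
      simp only [Function.mem_support, hF3_def] at hp
      have : p.1 = p.2 := by by_contra h; exact hp (if_neg h)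
      exact ⟨p.1, by rw [Prod.mk.injEq]; exact ⟨rfl, this⟩⟩
  rw [h1, h2, h3, hmul] at htot
  linarith

theorem symmetric_sum_depth_two_times_depth_one (l1 l2 l3 : ℕ)
    (h1 : 2 ≤ l1) (h2 : 2 ≤ l2) (h3 : 2 ≤ l3) :
    (∑ σ : Equiv.Perm (Fin 3),
        mzv ![![l1, l2, l3] (σ 0), ![l1, l2, l3] (σ 1)]
          * mzv ![![l1, l2, l3] (σ 2)]) =
      3 * (mzv ![l1] * mzv ![l2] * mzv ![l3])
        - (mzv ![l1 + l2] * mzv ![l3] + mzv ![l1 + l3] * mzv ![l2]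
            + mzv ![l2 + l3] * mzv ![l1]) := by
  have huniv : (Finset.univ : Finset (Equiv.Perm (Fin 3))) =
      {1, Equiv.swap 0 1, Equiv.swap 0 2, Equiv.swap 1 2,
        Equiv.swap 0 1 * Equiv.swap 1 2, Equiv.swap 1 2 * Equiv.swap 0 1} := by
    decide
  rw [huniv, Finset.sum_insert (by decide), Finset.sum_insert (by decide),
    Finset.sum_insert (by decide), Finset.sum_insert (by decide),
    Finset.sum_insert (by decide), Finset.sum_singleton]
  have e1 : ((1 : Equiv.Perm (Fin 3)) 0, (1 : Equiv.Perm (Fin 3)) 1,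
      (1 : Equiv.Perm (Fin 3)) 2) = (0, 1, 2) := by decide
  norm_num [show (Equiv.swap 0 1 : Equiv.Perm (Fin 3)) 0 = 1 from by decide,
    show (Equiv.swap 0 1 : Equiv.Perm (Fin 3)) 1 = 0 from by decide,
    show (Equiv.swap 0 1 : Equiv.Perm (Fin 3)) 2 = 2 from by decide,
    show (Equiv.swap 0 2 : Equiv.Perm (Fin 3)) 0 = 2 from by decide,
    show (Equiv.swap 0 2 : Equiv.Perm (Fin 3)) 1 = 1 from by decide,
    show (Equiv.swap 0 2 : Equiv.Perm (Fin 3)) 2 = 0 from by decide,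
    show (Equiv.swap 1 2 : Equiv.Perm (Fin 3)) 0 = 0 from by decide,
    show (Equiv.swap 1 2 : Equiv.Perm (Fin 3)) 1 = 2 from by decide,
    show (Equiv.swap 1 2 : Equiv.Perm (Fin 3)) 2 = 1 from by decide,
    show (Equiv.swap 0 1 * Equiv.swap 1 2 : Equiv.Perm (Fin 3)) 0 = 1 from by decide,
    show (Equiv.swap 0 1 * Equiv.swap 1 2 : Equiv.Perm (Fin 3)) 1 = 2 from by decide,
    show (Equiv.swap 0 1 * Equiv.swap 1 2 : Equiv.Perm (Fin 3)) 2 = 0 from by decide,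
    show (Equiv.swap 1 2 * Equiv.swap 0 1 : Equiv.Perm (Fin 3)) 0 = 2 from by decide,
    show (Equiv.swap 1 2 * Equiv.swap 0 1 : Equiv.Perm (Fin 3)) 1 = 0 from by decide,
    show (Equiv.swap 1 2 * Equiv.swap 0 1 : Equiv.Perm (Fin 3)) 2 = 1 from by decide,
    Matrix.cons_val_zero, Matrix.cons_val_one, Matrix.head_cons,
    Matrix.cons_val_two, Matrix.tail_cons]
  have s12 := stuffle l1 l2 h1 h2
  have s13 := stuffle l1 l3 h1 h3
  have s23 := stuffle l2 l3 h2 h3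
  linear_combination mzv ![l3] * s12 + mzv ![l2] * s13 + mzv ![l1] * s23
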